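/- (Theorem 6, Part 2; core inequality) Let (A, B, u_O, u_L) be a finite two-player bimatrix game with |u_O|, |u_L| ≤ 1 and B = {b_1, …, b_N}, and let U* be the value of the associated control problem. Let T ≥ 1, let γ > 2/T, and let α^1, …, α^T ∈ Δ(A) be any sequence of optimizer mixed strategies. Define σ(b_j, s) = Σ_{s'=1}^{s} u_L(α^{s'}, b_j) and, for each round t, J_t = { b_j ∈ B : max_i σ(b_i, t−1) − σ(b_j, t−1) < γT }. Then Σ_{t=1}^T min_{b ∈ J_t} u_O(α^t, b) ≤ U*·T. -/

import Mathlib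

open Finset

set_option maxRecDepth 2000
set_option maxHeartbeats 2000000

section Helpers

lemma sum_fin_filter_lt {k : ℕ} (F : Fin k → ℝ) (c : ℕ) (hc : c ≤ k) :
    ∑ l ∈ univ.filter (fun l : Fin k => (l : ℕ) < c), F l
      = ∑ m ∈ Finset.range c, (if h : m < k then F ⟨m, h⟩ else 0) := by
  rw [Finset.sum_filter]
  rw [show (∑ l : Fin k, if (l : ℕ) < c then F l else 0)
    = ∑ l : Fin k, (fun m : ℕ => if m < c then (if h : m < k then F ⟨m, h⟩ else 0) else 0) (l : ℕ) from by
      apply Finset.sum_congr rfl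
      intro l _
      simp [l.isLt]]
  rw [Fin.sum_univ_eq_sum_range
    (fun m : ℕ => if m < c then (if h : m < k then F ⟨m, h⟩ else 0) else 0) k]
  rw [← Finset.sum_filter]
  congr 1
  ext m
  simp only [Finset.mem_filter, Finset.mem_range]
  omega

lemma sum_fin_to_range {k : ℕ} (F : Fin k → ℝ) :
    ∑ l, F l = ∑ m ∈ Finset.range k, (if h : m < k then F ⟨m, h⟩ else 0) := by
  rw [← sum_fin_filter_lt F k le_rfl]
  congr 1
  exact (Finset.filter_true_of_mem (fun l _ => l.isLt)).symm

lemma sum_range_add' (G : ℕ → ℝ) (a b : ℕ) :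
    ∑ m ∈ Finset.range (a + b), G m
      = ∑ m ∈ Finset.range a, G m + ∑ m ∈ Finset.range b, G (a + m) := by
  induction b with
  | zero => simp
  | succ b ih => rw [← Nat.add_assoc, Finset.sum_range_succ, ih, Finset.sum_range_succ]; ring

lemma sum_range_mul (G : ℕ → ℝ) (n t : ℕ) :
    ∑ m ∈ Finset.range (n * t), G m
      = ∑ t' ∈ Finset.range t, ∑ r' ∈ Finset.range n, G (n * t' + r') := by
  induction t with
  | zero => simp
  | succ t ih =>
    rw [Nat.mul_succ, sum_range_add' G (n*t) n, ih, Finset.sum_range_succ]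


/-- Chain lemma: along a linear path `σ ↦ x + σ • Δ` from `s` to `1`, one can
subdivide into `n+1` segments such that each segment has a coordinate that is
maximal at both endpoints, provided the number of coordinates beating `j`
at `σ = 1` is at most `n` and `j` is maximal at `s`. -/
lemma chain_aux {N : ℕ} (x Δ : Fin N → ℝ) :
    ∀ (n : ℕ) (s : ℝ) (j : Fin N), s ≤ 1 →
    (∀ i, x i + s * Δ i ≤ x j + s * Δ j) →
    (univ.filter (fun i => x j + Δ j < x i + Δ i)).card ≤ n →
    ∃ (q : Fin (n+2) → ℝ) (jv : Fin (n+1) → Fin N),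
      Monotone q ∧ q 0 = s ∧ q (Fin.last (n+1)) = 1 ∧
      ∀ r : Fin (n+1),
        (∀ i, x i + q r.castSucc * Δ i ≤ x (jv r) + q r.castSucc * Δ (jv r)) ∧
        (∀ i, x i + q r.succ * Δ i ≤ x (jv r) + q r.succ * Δ (jv r)) := by
  intro n
  induction n with
  | zero =>
    intro s j hs1 hmax hcard
    have hempty : ∀ i, x i + Δ i ≤ x j + Δ j := by
      intro i
      by_contra h
      push_neg at h
      have : i ∈ univ.filter (fun i => x j + Δ j < x i + Δ i) := by
        simp [h]
      have := Finset.card_pos.mpr ⟨i, this⟩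
      omega
    refine ⟨fun r => if r = 0 then s else 1, fun _ => j, ?_, by simp, ?_, ?_⟩
    · intro a b hab
      by_cases ha : a = 0 <;> by_cases hb : b = 0 <;> simp [ha, hb, hs1]
      · have : a = 0 := le_antisymm (by rw [← hb]; exact hab) (Fin.zero_le a)
        exact absurd this ha
    · have : (Fin.last (0+1)) ≠ 0 := by decide
      simp [this]
    · intro r
      have hr : r = 0 := Fin.fin_one_eq_zero r
      subst hr
      constructor
      · intro i
        simpa using hmax i
      · intro i
        have : ((0 : Fin 1).succ : Fin 2) ≠ 0 := by
          intro h
          exact absurd (Fin.val_eq_of_eq h) (by simp)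
        simpa [this, one_mul] using hempty i
  | succ n ih =>
    intro s j hs1 hmax hcard
    set S := univ.filter (fun i => x j + Δ j < x i + Δ i) with hS
    by_cases hSe : S.Nonempty
    · -- real inductive step
      have hs_lt : s < 1 := by
        obtain ⟨i, hi⟩ := hSe
        rw [hS, mem_filter] at hi
        rcases lt_or_eq_of_le hs1 with h | h
        · exact h
        · exfalso; subst h; exact absurd (hmax i) (by linarith [hi.2])
      -- root function
      set ρ : Fin N → ℝ := fun i => (x j - x i) / (Δ i - Δ j) with hρ
      have key : ∀ i ∈ S, Δ j < Δ i ∧ s ≤ ρ i ∧ ρ i < 1 ∧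
          x j + ρ i * Δ j = x i + ρ i * Δ i := by
        intro i hi
        rw [hS, mem_filter] at hi
        have h1 : x j + Δ j < x i + Δ i := hi.2
        have h2 : x i + s * Δ i ≤ x j + s * Δ j := hmax i
        have hd : Δ j < Δ i := by nlinarith
        have hd' : 0 < Δ i - Δ j := by linarith
        constructor
        · exact hd
        refine ⟨?_, ?_, ?_⟩
        · rw [hρ, le_div_iff₀ hd']; nlinarith
        · rw [hρ, div_lt_one hd']; nlinarith
        · rw [hρ]; field_simp; ring
      set t0 := S.inf' hSe ρ with ht0
      obtain ⟨i0, hi0S, hi0⟩ := Finset.exists_mem_eq_inf' hSe ρ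
      have ht0_le : ∀ i ∈ S, t0 ≤ ρ i := fun i hi => Finset.inf'_le ρ hi
      obtain ⟨hd0, hsρ0, hρ0lt, heq0⟩ := key i0 hi0S
      have hst0 : s ≤ t0 := by rw [ht0, hi0]; exact hsρ0
      have ht0lt : t0 < 1 := by rw [ht0, hi0]; exact hρ0lt
      -- j is argmax at t0
      have hjmax_t0 : ∀ i, x i + t0 * Δ i ≤ x j + t0 * Δ j := by
        intro i
        by_cases hi : i ∈ S
        · obtain ⟨hd, hsρ, hρlt, heq⟩ := key i hi
          have := ht0_le i hi
          nlinarith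
        · rw [hS, mem_filter] at hi
          push_neg at hi
          have h1 : x i + Δ i ≤ x j + Δ j := hi (mem_univ i)
          have h2 := hmax i
          rcases le_or_gt (Δ i - Δ j) 0 with h | h
          · nlinarith
          · nlinarith
      -- i0 is argmax at t0
      have heqt0 : x i0 + t0 * Δ i0 = x j + t0 * Δ j := by
        rw [ht0, hi0]; linarith [heq0]
      have hi0max : ∀ i, x i + t0 * Δ i ≤ x i0 + t0 * Δ i0 := by
        intro i; rw [heqt0]; exact hjmax_t0 i
      -- new overtaker set is smaller
      have hnew : (univ.filter (fun i => x i0 + Δ i0 < x i + Δ i)).card ≤ n := by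
        have hsub : (univ.filter (fun i => x i0 + Δ i0 < x i + Δ i)) ⊆ S.erase i0 := by
          intro i hi
          rw [mem_filter] at hi
          rw [mem_erase]
          have hj1 : x j + Δ j < x i0 + Δ i0 := by
            rw [hS, mem_filter] at hi0S; exact hi0S.2
          constructor
          · intro h; subst h; linarith [hi.2]
          · rw [hS, mem_filter]; exact ⟨mem_univ i, by linarith [hi.2]⟩
        have h1 := Finset.card_le_card hsub
        have h2 := Finset.card_erase_of_mem hi0S
        have h3 : S.card ≤ n + 1 := hcard
        omega
      obtain ⟨q', jv', hmono', hq0', hqlast', hseg'⟩ :=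
        ih t0 i0 (le_of_lt ht0lt) hi0max hnew
      refine ⟨Fin.cons s q', Fin.cons j jv', ?_, by simp, ?_, ?_⟩
      · rw [Fin.monotone_iff_le_succ]
        intro i
        induction i using Fin.cases with
        | zero => simpa [hq0'] using hst0
        | succ i =>
          rw [← Fin.succ_castSucc, Fin.cons_succ, Fin.cons_succ]
          exact hmono' (Fin.castSucc_le_succ i)
      · rw [← Fin.succ_last, Fin.cons_succ]; exact hqlast'
      · intro r
        induction r using Fin.cases with
        | zero =>
          constructor
          · intro i; simpa using hmax i
          · intro i
            have h1 : (Fin.cons s q' : Fin (n+3) → ℝ) ((0:Fin (n+2)).succ) = q' 0 := Fin.cons_succ _ _ _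
            simp only [Fin.cons_zero, h1, hq0']
            exact hjmax_t0 i
        | succ r =>
          rw [Fin.cons_succ, ← Fin.succ_castSucc, Fin.cons_succ, Fin.cons_succ]
          exact hseg' r
    · -- S empty: constant chain
      rw [Finset.not_nonempty_iff_eq_empty] at hSe
      have hempty : ∀ i, x i + Δ i ≤ x j + Δ j := by
        intro i
        by_contra h
        push_neg at h
        have : i ∈ S := by rw [hS, mem_filter]; exact ⟨mem_univ i, h⟩
        rw [hSe] at this
        exact absurd this (Finset.notMem_empty i)
      refine ⟨fun r => if r = 0 then s else 1, fun _ => j, ?_, by simp, ?_, ?_⟩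
      · intro a b hab
        by_cases ha : a = 0 <;> by_cases hb : b = 0 <;> simp [ha, hb, hs1]
        · have : a = 0 := le_antisymm (by rw [← hb]; exact hab) (Fin.zero_le a)
          exact absurd this ha
      · have : (Fin.last (n+2)) ≠ 0 := by
          intro h
          exact absurd (Fin.val_eq_of_eq h) (by simp [Fin.last])
        simp [this]
      · intro r
        constructor
        · intro i
          by_cases h : r.castSucc = 0 <;> simp [h]
          · simpa using hmax i
          · simpa using hempty i
        · intro i
          have : r.succ ≠ 0 := Fin.succ_ne_zero r
          simp [this]
          simpa using hempty i

end Helpers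

/-- A probability distribution (mixed strategy) on a finite type. -/
def IsDist {X : Type*} [Fintype X] (f : X → ℝ) : Prop :=
  (∀ x, 0 ≤ f x) ∧ ∑ x, f x = 1

/-- The set of utilities `U(π)` of valid strategies `π` for the control
problem: `π = ((α_1, t_1, j_1), …, (α_k, t_k, j_k))` with `t_i ≥ 0`,
`∑ t_i = 1`, and each state `P_{i−1} = ∑_{l < i} t_l · v(α_l)` and
`P_i = ∑_{l ≤ i} t_l · v(α_l)` lying in the region `S_{j_i}`, where
`v(α)_j = u_L(α, b_j)`.  Its supremum is the value `U*`. -/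
def ControlSet {A : Type*} [Fintype A] (N : ℕ) (uO uL : A → Fin N → ℝ) : Set ℝ :=
  {u | ∃ (k : ℕ) (α : Fin k → A → ℝ) (tv : Fin k → ℝ) (jv : Fin k → Fin N),
    (∀ i, IsDist (α i)) ∧ (∀ i, 0 ≤ tv i) ∧ (∑ i, tv i = 1) ∧
    (∀ (i : Fin k) (j : Fin N),
      (∑ l ∈ univ.filter (fun l : Fin k => (l : ℕ) < (i : ℕ)),
          tv l * ∑ a, α l a * uL a j)
        ≤ (∑ l ∈ univ.filter (fun l : Fin k => (l : ℕ) < (i : ℕ)),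
          tv l * ∑ a, α l a * uL a (jv i)) ∧
      (∑ l ∈ univ.filter (fun l : Fin k => (l : ℕ) ≤ (i : ℕ)),
          tv l * ∑ a, α l a * uL a j)
        ≤ (∑ l ∈ univ.filter (fun l : Fin k => (l : ℕ) ≤ (i : ℕ)),
          tv l * ∑ a, α l a * uL a (jv i))) ∧
    u = ∑ i, tv i * ∑ a, α i a * uO a (jv i)}

/-- Theorem 6, Part 2 (core inequality).  For any sequence of optimizer mixed
strategies, the sum over rounds of the worst optimizer utility over the set
`J_t` of learner actions whose cumulative utility is within `γT` of the best
is at most `U*·T`. -/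
theorem stmt13 {A : Type*} [Fintype A] [Nonempty A] {N : ℕ} (hN : 0 < N)
    (uO uL : A → Fin N → ℝ)
    (hO : ∀ a j, |uO a j| ≤ 1) (hL : ∀ a j, |uL a j| ≤ 1)
    (Ustar : ℝ) (hU : IsLUB (ControlSet N uO uL) Ustar)
    (T : ℕ) (hT : 1 ≤ T) (γ : ℝ) (hγ : 2 / (T : ℝ) < γ)
    (αseq : Fin T → A → ℝ) (hαseq : ∀ t, IsDist (αseq t)) :
    ∑ t : Fin T, sInf {u : ℝ | ∃ j : Fin N,
        (∀ i : Fin N,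
          (∑ s ∈ univ.filter (fun s : Fin T => s < t), ∑ a, αseq s a * uL a i)
            - (∑ s ∈ univ.filter (fun s : Fin T => s < t), ∑ a, αseq s a * uL a j)
            < γ * T) ∧
        u = ∑ a, αseq t a * uO a j}
      ≤ Ustar * T := by
  obtain ⟨M, rfl⟩ : ∃ M, N = M + 1 := ⟨N - 1, by omega⟩
  have hT0 : (0 : ℝ) < T := by exact_mod_cast hT
  have h2γT : (2 : ℝ) < γ * T := by
    rw [div_lt_iff₀ hT0] at hγ; exact hγ
  -- abbreviations
  set w : Fin T → Fin (M+1) → ℝ := fun t i => ∑ a, αseq t a * uL a i with hw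
  set X : Fin T → Fin (M+1) → ℝ :=
    fun t i => ∑ s ∈ univ.filter (fun s : Fin T => s < t), w s i with hX
  set St : Fin T → Set ℝ := fun t => {u : ℝ | ∃ j : Fin (M+1),
      (∀ i : Fin (M+1), X t i - X t j < γ * T) ∧
      u = ∑ a, αseq t a * uO a j} with hSt
  -- bound on |w|
  have hwb : ∀ t i, |w t i| ≤ 1 := by
    intro t i
    have h1 : |w t i| ≤ ∑ a, |αseq t a * uL a i| := Finset.abs_sum_le_sum_abs _ _
    have h2 : ∀ a : A, |αseq t a * uL a i| ≤ αseq t a := by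
      intro a
      rw [abs_mul, abs_of_nonneg ((hαseq t).1 a)]
      calc αseq t a * |uL a i| ≤ αseq t a * 1 :=
            mul_le_mul_of_nonneg_left (hL a i) ((hαseq t).1 a)
        _ = αseq t a := mul_one _
    calc |w t i| ≤ ∑ a, |αseq t a * uL a i| := h1
      _ ≤ ∑ a, αseq t a := Finset.sum_le_sum (fun a _ => h2 a)
      _ = 1 := (hαseq t).2
  -- chains for each round
  have hchains : ∀ t : Fin T, ∃ (q : Fin (M+2) → ℝ) (jv : Fin (M+1) → Fin (M+1)),
      Monotone q ∧ q 0 = 0 ∧ q (Fin.last (M+1)) = 1 ∧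
      ∀ r : Fin (M+1),
        (∀ i, X t i + q r.castSucc * w t i ≤ X t (jv r) + q r.castSucc * w t (jv r)) ∧
        (∀ i, X t i + q r.succ * w t i ≤ X t (jv r) + q r.succ * w t (jv r)) := by
    intro t
    obtain ⟨j0, -, hj0⟩ := Finset.exists_max_image univ (fun i => X t i) ⟨⟨0, Nat.succ_pos M⟩, mem_univ _⟩
    have hcard : (univ.filter (fun i => X t j0 + w t j0 < X t i + w t i)).card ≤ M := by
      have hsub : (univ.filter (fun i => X t j0 + w t j0 < X t i + w t i)) ⊆ univ.erase j0 := by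
        intro i hi
        rw [mem_filter] at hi
        rw [mem_erase]
        refine ⟨fun h => ?_, mem_univ i⟩
        subst h; exact lt_irrefl _ hi.2
      have := Finset.card_le_card hsub
      have h2 : (univ.erase j0).card = M := by
        rw [Finset.card_erase_of_mem (mem_univ _)]
        simp
      omega
    obtain ⟨q, jv, h1, h2, h3, h4⟩ := chain_aux (X t) (w t) M 0 j0 (by norm_num)
      (fun i => by simpa using hj0 i (mem_univ i)) hcard
    exact ⟨q, jv, h1, h2, h3, h4⟩
  choose q jv hmono hq0 hqlast hseg using hchains
  -- chains stay in [0,1]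
  have hq01 : ∀ t r, 0 ≤ q t r ∧ q t r ≤ 1 := by
    intro t r
    constructor
    · rw [← hq0 t]; exact hmono t (Fin.zero_le r)
    · rw [← hqlast t]; exact hmono t (Fin.le_last r)
  -- membership of the jv's in the J_t sets
  have hmem : ∀ (t : Fin T) (r : Fin (M+1)) (s : Fin (M+2)),
      (∑ a, αseq t a * uO a (jv t r)) ∈ St t := by
    intro t r s
    refine ⟨jv t r, fun i => ?_, rfl⟩
    have harg := (hseg t r).1 i
    have h0 : 0 ≤ q t r.castSucc := (hq01 t _).1
    have h1 : q t r.castSucc ≤ 1 := (hq01 t _).2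
    have hwi := hwb t i
    have hwj := hwb t (jv t r)
    rw [abs_le] at hwi hwj
    nlinarith [hwi.1, hwi.2, hwj.1, hwj.2]
  -- each St t is bounded below
  have hbdd : ∀ t : Fin T, BddBelow (St t) := by
    intro t
    apply BddBelow.mono (_ : St t ⊆ Set.range (fun j : Fin (M+1) => ∑ a, αseq t a * uO a j))
    · exact (Set.finite_range _).bddBelow
    · rintro u ⟨j, -, rfl⟩; exact ⟨j, rfl⟩
  have hsInf_le : ∀ (t : Fin T) (r : Fin (M+1)),
      sInf (St t) ≤ ∑ a, αseq t a * uO a (jv t r) :=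
    fun t r => csInf_le (hbdd t) (hmem t r 0)
  -- the control strategy
  set k := T * (M+1) with hk
  have hMpos : 0 < M + 1 := Nat.succ_pos M
  have htlv : ∀ l : Fin k, (l : ℕ) / (M+1) < T := by
    intro l
    rw [Nat.div_lt_iff_lt_mul hMpos]
    exact l.isLt
  set tl : Fin k → Fin T := fun l => ⟨(l : ℕ) / (M+1), htlv l⟩ with htl
  set rl : Fin k → Fin (M+1) := fun l => ⟨(l : ℕ) % (M+1), Nat.mod_lt _ hMpos⟩ with hrl
  set tv : Fin k → ℝ := fun l => (q (tl l) (rl l).succ - q (tl l) (rl l).castSucc) / T with htv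
  set jf : Fin k → Fin (M+1) := fun l => jv (tl l) (rl l) with hjf
  set uval : ℝ := ∑ l, tv l * ∑ a, αseq (tl l) a * uO a (jf l) with huval
  -- basic facts about indices
  have hmemk : ∀ (t' : Fin T) (r' : ℕ), r' < M + 1 → (M+1) * (t' : ℕ) + r' < k := by
    intro t' r' hr'
    calc (M+1) * (t' : ℕ) + r' < (M+1) * (t' : ℕ) + (M+1) := by omega
      _ = (M+1) * ((t' : ℕ) + 1) := by ring
      _ ≤ (M+1) * T := Nat.mul_le_mul_left _ t'.isLt
      _ = k := by rw [hk, Nat.mul_comm]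
  have hidx : ∀ (t' : Fin T) (r' : ℕ) (hr' : r' < M + 1) (h : (M+1) * (t' : ℕ) + r' < k),
      tl ⟨_, h⟩ = t' ∧ rl ⟨_, h⟩ = ⟨r', hr'⟩ := by
    intro t' r' hr' h
    constructor
    · apply Fin.ext
      show ((M+1) * (t' : ℕ) + r') / (M+1) = (t' : ℕ)
      rw [Nat.mul_add_div hMpos, Nat.div_eq_of_lt hr', Nat.add_zero]
    · apply Fin.ext
      show ((M+1) * (t' : ℕ) + r') % (M+1) = r'
      rw [Nat.mul_add_mod, Nat.mod_eq_of_lt hr']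
  -- the "extended chain" function
  set Qf : Fin T → ℕ → ℝ := fun t v => q t ⟨min v (M+1), by omega⟩ with hQf
  have hQf0 : ∀ t, Qf t 0 = 0 := by
    intro t
    rw [hQf]
    convert hq0 t using 2
    exact Fin.ext (by simp)
  have hQflast : ∀ t (c : ℕ), M + 1 ≤ c → Qf t c = 1 := by
    intro t c hc
    have e : (⟨min c (M+1), (by omega : min c (M+1) < M+2)⟩ : Fin (M+2)) = Fin.last (M+1) := by
      apply Fin.ext
      simp [Fin.last]
      omega
    calc Qf t c = q t (Fin.last (M+1)) := by rw [hQf]; exact congrArg (q t) e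
      _ = 1 := hqlast t
  have htele : ∀ (t : Fin T) (c : ℕ),
      ∑ r' ∈ Finset.range c, (Qf t (r'+1) - Qf t r') = Qf t c := by
    intro t c
    rw [Finset.sum_range_sub (Qf t) c, hQf0 t, sub_zero]
  -- per-entry values of the strategy
  have hGtv : ∀ (t' : Fin T) (r' : ℕ) (hr' : r' < M + 1),
      tv ⟨_, hmemk t' r' hr'⟩ = (Qf t' (r'+1) - Qf t' r') / T := by
    intro t' r' hr'
    rw [htv]
    obtain ⟨e1, e2⟩ := hidx t' r' hr' (hmemk t' r' hr')
    simp only [e1, e2]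
    have e3 : q t' (⟨r', hr'⟩ : Fin (M+1)).succ = Qf t' (r'+1) := by
      rw [hQf]
      exact congrArg (q t') (Fin.ext (by simp; omega))
    have e4 : q t' (⟨r', hr'⟩ : Fin (M+1)).castSucc = Qf t' r' := by
      rw [hQf]
      exact congrArg (q t') (Fin.ext (by simp; omega))
    rw [e3, e4]
  have hQcast : ∀ (t : Fin T) (r : Fin (M+1)), Qf t (r : ℕ) = q t r.castSucc := by
    intro t r
    rw [hQf]
    refine congrArg (q t) (Fin.ext ?_)
    simp <;> omega
  have hQsucc : ∀ (t : Fin T) (r : Fin (M+1)), Qf t ((r : ℕ)+1) = q t r.succ := by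
    intro t r
    rw [hQf]
    refine congrArg (q t) (Fin.ext ?_)
    simp <;> omega
  -- extended entry functions
  set Gn : Fin (M+1) → ℕ → ℝ := fun jj m =>
    if h : m < k then tv ⟨m, h⟩ * w (tl ⟨m, h⟩) jj else 0 with hGn
  have hGnval : ∀ (t' : Fin T) (r' : ℕ) (hr' : r' < M + 1) (jj : Fin (M+1)),
      Gn jj ((M+1) * (t' : ℕ) + r') = (Qf t' (r'+1) - Qf t' r') / T * w t' jj := by
    intro t' r' hr' jj
    rw [show Gn jj ((M+1) * (t' : ℕ) + r')
        = tv ⟨(M+1) * (t' : ℕ) + r', hmemk t' r' hr'⟩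
            * w (tl ⟨(M+1) * (t' : ℕ) + r', hmemk t' r' hr'⟩) jj
      from dif_pos (hmemk t' r' hr')]
    rw [hGtv t' r' hr', (hidx t' r' hr' (hmemk t' r' hr')).1]
  have hblock : ∀ (t' : Fin T) (c : ℕ), c ≤ M + 1 → ∀ jj : Fin (M+1),
      ∑ r' ∈ Finset.range c, Gn jj ((M+1) * (t' : ℕ) + r') = Qf t' c / T * w t' jj := by
    intro t' c hc jj
    have h1 : ∀ r' ∈ Finset.range c, Gn jj ((M+1) * (t' : ℕ) + r')
        = (Qf t' (r'+1) - Qf t' r') / T * w t' jj := by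
      intro r' hr'
      exact hGnval t' r' (by have := Finset.mem_range.mp hr'; omega) jj
    rw [Finset.sum_congr rfl h1, ← Finset.sum_mul, ← Finset.sum_div, htele t' c]
  have hXr : ∀ (t : Fin T) (jj : Fin (M+1)),
      X t jj = ∑ t' ∈ Finset.range (t : ℕ), (if h : t' < T then w ⟨t', h⟩ jj else 0) := by
    intro t jj
    have hfe : univ.filter (fun s : Fin T => s < t)
        = univ.filter (fun s : Fin T => (s : ℕ) < (t : ℕ)) := by
      apply Finset.filter_congr
      intro s _
      rw [Fin.lt_def]
    rw [hX]
    simp only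
    rw [hfe]
    exact sum_fin_filter_lt (fun s : Fin T => w s jj) (t : ℕ) (le_of_lt t.isLt)
  have hkey : ∀ (t : Fin T) (r : ℕ), r ≤ M + 1 → ∀ jj : Fin (M+1),
      ∑ m ∈ Finset.range ((M+1) * (t : ℕ) + r), Gn jj m
        = (X t jj + Qf t r * w t jj) / T := by
    intro t r hr jj
    rw [sum_range_add', sum_range_mul]
    have h1 : ∀ t' ∈ Finset.range (t : ℕ),
        (∑ r' ∈ Finset.range (M+1), Gn jj ((M+1) * t' + r'))
          = (if h : t' < T then w ⟨t', h⟩ jj else 0) / T := by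
      intro t' ht'
      have hlt : t' < T := lt_trans (Finset.mem_range.mp ht') t.isLt
      rw [dif_pos hlt]
      have hb := hblock ⟨t', hlt⟩ (M+1) le_rfl jj
      rw [show ((⟨t', hlt⟩ : Fin T) : ℕ) = t' from rfl] at hb
      rw [hb, hQflast _ _ le_rfl]
      ring
    rw [Finset.sum_congr rfl h1, hblock t r hr jj, hXr t jj, ← Finset.sum_div]
    ring
  -- entry function for the time weights alone
  set Gt : ℕ → ℝ := fun m => if h : m < k then tv ⟨m, h⟩ else 0 with hGt
  have hGtval : ∀ (t' : Fin T) (r' : ℕ) (hr' : r' < M + 1),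
      Gt ((M+1) * (t' : ℕ) + r') = (Qf t' (r'+1) - Qf t' r') / T := by
    intro t' r' hr'
    rw [show Gt ((M+1) * (t' : ℕ) + r') = tv ⟨(M+1) * (t' : ℕ) + r', hmemk t' r' hr'⟩
      from dif_pos (hmemk t' r' hr')]
    exact hGtv t' r' hr'
  have htblock : ∀ (t' : Fin T),
      ∑ r' ∈ Finset.range (M+1), Gt ((M+1) * (t' : ℕ) + r') = 1 / T := by
    intro t'
    have h1 : ∀ r' ∈ Finset.range (M+1), Gt ((M+1) * (t' : ℕ) + r')
        = (Qf t' (r'+1) - Qf t' r') / T :=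
      fun r' hr' => hGtval t' r' (Finset.mem_range.mp hr')
    rw [Finset.sum_congr rfl h1, ← Finset.sum_div, htele, hQflast _ _ le_rfl]
  -- membership in the control set
  have hiv : ∀ i : Fin k, (M+1) * ((tl i) : ℕ) + ((rl i) : ℕ) = (i : ℕ) :=
    fun i => Nat.div_add_mod _ _
  have humem : uval ∈ ControlSet (M+1) uO uL := by
    refine ⟨k, fun l => αseq (tl l), tv, jf, fun l => hαseq (tl l), ?_, ?_, ?_, rfl⟩
    · intro l
      show 0 ≤ (q (tl l) (rl l).succ - q (tl l) (rl l).castSucc) / T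
      apply div_nonneg _ (le_of_lt hT0)
      rw [sub_nonneg]
      exact hmono _ (Fin.castSucc_le_succ _)
    · rw [sum_fin_to_range tv]
      show ∑ m ∈ Finset.range k, Gt m = 1
      rw [show k = (M+1) * T from by rw [hk, Nat.mul_comm], sum_range_mul]
      have h1 : ∀ t' ∈ Finset.range T,
          (∑ r' ∈ Finset.range (M+1), Gt ((M+1) * t' + r')) = 1 / T := by
        intro t' ht'
        exact htblock ⟨t', Finset.mem_range.mp ht'⟩
      rw [Finset.sum_congr rfl h1, Finset.sum_const, Finset.card_range, nsmul_eq_mul]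
      field_simp
    · intro i j
      have hstrict : ∀ jj : Fin (M+1),
          (∑ l ∈ univ.filter (fun l : Fin k => (l : ℕ) < (i : ℕ)),
              tv l * ∑ a, αseq (tl l) a * uL a jj)
            = (X (tl i) jj + q (tl i) (rl i).castSucc * w (tl i) jj) / T := by
        intro jj
        rw [sum_fin_filter_lt (fun l : Fin k => tv l * ∑ a, αseq (tl l) a * uL a jj)
          (i : ℕ) (le_of_lt i.isLt)]
        show ∑ m ∈ Finset.range (i : ℕ), Gn jj m = _
        rw [← hiv i, hkey (tl i) ((rl i) : ℕ) (le_of_lt (rl i).isLt) jj, hQcast]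
      have hle : ∀ jj : Fin (M+1),
          (∑ l ∈ univ.filter (fun l : Fin k => (l : ℕ) ≤ (i : ℕ)),
              tv l * ∑ a, αseq (tl l) a * uL a jj)
            = (X (tl i) jj + q (tl i) (rl i).succ * w (tl i) jj) / T := by
        intro jj
        have hfe : univ.filter (fun l : Fin k => (l : ℕ) ≤ (i : ℕ))
            = univ.filter (fun l : Fin k => (l : ℕ) < (i : ℕ) + 1) := by
          apply Finset.filter_congr
          intro l _
          simp
        rw [hfe, sum_fin_filter_lt (fun l : Fin k => tv l * ∑ a, αseq (tl l) a * uL a jj)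
          ((i : ℕ) + 1) i.isLt]
        show ∑ m ∈ Finset.range ((i : ℕ) + 1), Gn jj m = _
        rw [show (i : ℕ) + 1 = (M+1) * ((tl i) : ℕ) + (((rl i) : ℕ) + 1) from by
          rw [← hiv i, Nat.add_assoc]]
        rw [hkey (tl i) (((rl i) : ℕ) + 1) (rl i).isLt jj, hQsucc]
      constructor
      · rw [hstrict j, hstrict (jf i)]
        have h := (hseg (tl i) (rl i)).1 j
        exact div_le_div_of_nonneg_right h (le_of_lt hT0)
      · rw [hle j, hle (jf i)]
        have h := (hseg (tl i) (rl i)).2 j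
        exact div_le_div_of_nonneg_right h (le_of_lt hT0)
  have huU : uval ≤ Ustar := hU.1 humem
  -- lower bound on uval
  set GO : ℕ → ℝ := fun m =>
    if h : m < k then tv ⟨m, h⟩ * ∑ a, αseq (tl ⟨m, h⟩) a * uO a (jf ⟨m, h⟩) else 0 with hGO
  have hGOval : ∀ (t' : Fin T) (r' : ℕ) (hr' : r' < M+1),
      GO ((M+1) * (t' : ℕ) + r')
        = (Qf t' (r'+1) - Qf t' r') / T * ∑ a, αseq t' a * uO a (jv t' ⟨r', hr'⟩) := by
    intro t' r' hr'
    rw [show GO ((M+1) * (t' : ℕ) + r')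
        = tv ⟨(M+1) * (t' : ℕ) + r', hmemk t' r' hr'⟩
            * ∑ a, αseq (tl ⟨(M+1) * (t' : ℕ) + r', hmemk t' r' hr'⟩) a
                * uO a (jf ⟨(M+1) * (t' : ℕ) + r', hmemk t' r' hr'⟩)
      from dif_pos (hmemk t' r' hr')]
    rw [hGtv t' r' hr']
    obtain ⟨e1, e2⟩ := hidx t' r' hr' (hmemk t' r' hr')
    simp only [hjf, e1, e2]
  have hround : ∀ (t' : Fin T),
      sInf (St t') / T ≤ ∑ r' ∈ Finset.range (M+1), GO ((M+1) * (t' : ℕ) + r') := by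
    intro t'
    have h1 : ∀ r' ∈ Finset.range (M+1),
        (Qf t' (r'+1) - Qf t' r') / T * sInf (St t')
          ≤ GO ((M+1) * (t' : ℕ) + r') := by
      intro r' hr'
      have hr'' : r' < M+1 := Finset.mem_range.mp hr'
      rw [hGOval t' r' hr'']
      apply mul_le_mul_of_nonneg_left (hsInf_le t' ⟨r', hr''⟩)
      apply div_nonneg _ (le_of_lt hT0)
      rw [sub_nonneg,
        show Qf t' r' = q t' (⟨r', hr''⟩ : Fin (M+1)).castSucc from hQcast t' ⟨r', hr''⟩,
        show Qf t' (r'+1) = q t' (⟨r', hr''⟩ : Fin (M+1)).succ from hQsucc t' ⟨r', hr''⟩]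
      exact hmono t' (Fin.castSucc_le_succ _)
    calc sInf (St t') / T
        = (∑ r' ∈ Finset.range (M+1), (Qf t' (r'+1) - Qf t' r') / T) * sInf (St t') := by
          rw [← Finset.sum_div, htele, hQflast _ _ le_rfl]
          ring
      _ = ∑ r' ∈ Finset.range (M+1), (Qf t' (r'+1) - Qf t' r') / T * sInf (St t') := by
          rw [Finset.sum_mul]
      _ ≤ _ := Finset.sum_le_sum h1
  have htotal : (∑ t : Fin T, sInf (St t)) / T ≤ uval := by
    have e1 : uval = ∑ m ∈ Finset.range ((M+1) * T), GO m := by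
      rw [huval, sum_fin_to_range (fun l : Fin k => tv l * ∑ a, αseq (tl l) a * uO a (jf l))]
      rw [show (M+1) * T = k from by rw [hk, Nat.mul_comm]]
    rw [e1, sum_range_mul,
      sum_fin_to_range (fun t : Fin T => sInf (St t)), Finset.sum_div]
    apply Finset.sum_le_sum
    intro t' ht'
    have hlt : t' < T := Finset.mem_range.mp ht'
    rw [dif_pos hlt]
    exact hround ⟨t', hlt⟩
  have h1 : (∑ t : Fin T, sInf (St t)) / T ≤ Ustar := le_trans htotal huU
  calc (∑ t : Fin T, sInf (St t))
      = ((∑ t : Fin T, sInf (St t)) / T) * T := by field_simp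
    _ ≤ Ustar * T := mul_le_mul_of_nonneg_right h1 (le_of_lt hT0)
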